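/- Let (M,d,μ) be a doubling metric measure space, let x₀ ∈ M, R > 0, α > 0 and A ≥ 0, and let u ∈ L²(B(x₀,R),μ). Assume the Hölder-type estimate: for almost every x, y ∈ B(x₀, R/2), |u(x) − u(y)| ≤ A (d(x,y)/R)^α · osc_{B(x₀,R)}(u), where osc_B(u) = (⨍_B |u − ⨍_B u dμ|² dμ)^{1/2}. Then there is a constant C, depending only on the doubling constant, α and A, such that for every 0 < r ≤ R: osc_{B(x₀,r)}(u) ≤ C (r/R)^α osc_{B(x₀,R)}(u). (This is the oscillation-decay step (eq. (4.2)) in the proof of Theorem 4.5 of the paper, deducing geometric decay of the L² oscillation from the elliptic regularity estimate (ER).) -/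

import Mathlib

open MeasureTheory Metric

/-- The `L²` oscillation of `u` over the set `B`:
`osc_B(u) = (⨍_B |u - ⨍_B u dμ|² dμ)^(1/2)`. -/
noncomputable def osc2 {M : Type*} [MeasurableSpace M] (μ : Measure M)
    (B : Set M) (u : M → ℝ) : ℝ :=
  (⨍ y in B, |u y - ⨍ z in B, u z ∂μ| ^ (2 : ℝ) ∂μ) ^ ((1 : ℝ) / 2)

/-- `(M, d, μ)` is doubling with constant `C_D`. -/
def IsDoublingWith {M : Type*} [PseudoMetricSpace M] [MeasurableSpace M]
    (μ : Measure M) (C_D : ℝ) : Prop :=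
  ∀ (x : M) (r : ℝ), 0 < r → μ (ball x (2 * r)) ≤ ENNReal.ofReal C_D * μ (ball x r)

section Aux

variable {M : Type*} [MeasurableSpace M] {μ : Measure M}

lemma osc2_eq_sqrt (B : Set M) (u : M → ℝ) :
    osc2 μ B u = Real.sqrt (⨍ y in B, (u y - ⨍ z in B, u z ∂μ) ^ 2 ∂μ) := by
  have h : ∀ t : ℝ, |t| ^ (2 : ℝ) = t ^ 2 := fun t => by
    rw [show (2 : ℝ) = ((2 : ℕ) : ℝ) by norm_num, Real.rpow_natCast, sq_abs]
  unfold osc2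
  rw [Real.sqrt_eq_rpow]
  congr 1
  exact average_congr (Filter.Eventually.of_forall fun y => h _)

lemma osc2_nonneg (B : Set M) (u : M → ℝ) : 0 ≤ osc2 μ B u := by
  rw [osc2_eq_sqrt]; exact Real.sqrt_nonneg _

lemma osc2_le_of_ae_bound {B : Set M} (h0 : μ B ≠ 0) (hfin : μ B ≠ ⊤)
    {u : M → ℝ} (hu : IntegrableOn u B μ) {K : ℝ} (hK : 0 ≤ K)
    (h : ∀ᵐ x ∂μ.restrict B, ∀ᵐ y ∂μ.restrict B, |u x - u y| ≤ K) :
    osc2 μ B u ≤ K := by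
  set m := ⨍ z in B, u z ∂μ with hm
  have hpos : 0 < (μ B).toReal := ENNReal.toReal_pos h0 hfin
  have hconst : ∀ c : ℝ, IntegrableOn (fun _ => c) B μ :=
    fun c => integrableOn_const hfin
  have hbd : ∀ᵐ x ∂μ.restrict B, |u x - m| ≤ K := by
    filter_upwards [h] with x hx
    have h1 : ∫ y in B, (u x - u y) ∂μ = (μ B).toReal * u x - ∫ y in B, u y ∂μ := by
      rw [integral_sub (hconst (u x)) hu, setIntegral_const, smul_eq_mul, measureReal_def]
    have h2 : u x - m = (μ B).toReal⁻¹ * ∫ y in B, (u x - u y) ∂μ := by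
      rw [h1, hm, setAverage_eq, smul_eq_mul, measureReal_def]
      field_simp
    have h3 : |∫ y in B, (u x - u y) ∂μ| ≤ (μ B).toReal * K := by
      calc |∫ y in B, (u x - u y) ∂μ| ≤ ∫ y in B, |u x - u y| ∂μ := by
              simpa [Real.norm_eq_abs] using
                norm_integral_le_integral_norm (μ := μ.restrict B) (fun y => u x - u y)
        _ ≤ ∫ _ in B, K ∂μ :=
              integral_mono_of_nonneg (Filter.Eventually.of_forall fun y => abs_nonneg _)
                (hconst K) hx
        _ = (μ B).toReal * K := by rw [setIntegral_const, smul_eq_mul, measureReal_def]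
    calc |u x - m| = (μ B).toReal⁻¹ * |∫ y in B, (u x - u y) ∂μ| := by
            rw [h2, abs_mul, abs_inv, abs_of_pos hpos]
      _ ≤ (μ B).toReal⁻¹ * ((μ B).toReal * K) :=
            mul_le_mul_of_nonneg_left h3 (inv_nonneg.2 hpos.le)
      _ = K := by field_simp
  rw [osc2_eq_sqrt]
  have hIle : ∫ y in B, (u y - m) ^ 2 ∂μ ≤ (μ B).toReal * K ^ 2 := by
    calc ∫ y in B, (u y - m) ^ 2 ∂μ ≤ ∫ _ in B, K ^ 2 ∂μ := by
          refine integral_mono_of_nonneg (Filter.Eventually.of_forall fun y => sq_nonneg _)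
            (hconst (K ^ 2)) ?_
          filter_upwards [hbd] with y hy
          calc (u y - m) ^ 2 = |u y - m| ^ 2 := (sq_abs _).symm
            _ ≤ K ^ 2 := pow_le_pow_left₀ (abs_nonneg _) hy 2
      _ = (μ B).toReal * K ^ 2 := by rw [setIntegral_const, smul_eq_mul, measureReal_def]
  have havg : ⨍ y in B, (u y - m) ^ 2 ∂μ ≤ K ^ 2 := by
    rw [setAverage_eq, smul_eq_mul, measureReal_def]
    calc (μ B).toReal⁻¹ * ∫ y in B, (u y - m) ^ 2 ∂μ
        ≤ (μ B).toReal⁻¹ * ((μ B).toReal * K ^ 2) :=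
          mul_le_mul_of_nonneg_left hIle (inv_nonneg.2 hpos.le)
      _ = K ^ 2 := by field_simp
  calc Real.sqrt (⨍ y in B, (u y - m) ^ 2 ∂μ) ≤ Real.sqrt (K ^ 2) := Real.sqrt_le_sqrt havg
    _ = K := Real.sqrt_sq hK

lemma osc2_mono_set {B₁ B₂ : Set M} (hsub : B₁ ⊆ B₂) (h0 : μ B₁ ≠ 0)
    (hfin : μ B₂ ≠ ⊤) {u : M → ℝ} (hu : MemLp u 2 (μ.restrict B₂)) :
    osc2 μ B₁ u ≤ Real.sqrt ((μ B₂).toReal / (μ B₁).toReal) * osc2 μ B₂ u := by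
  have hfin1 : μ B₁ ≠ ⊤ := ((measure_mono hsub).trans_lt hfin.lt_top).ne
  have h02 : μ B₂ ≠ 0 := fun h =>
    h0 (le_antisymm (h ▸ measure_mono hsub) zero_le)
  have hpos1 : 0 < (μ B₁).toReal := ENNReal.toReal_pos h0 hfin1
  have hpos2 : 0 < (μ B₂).toReal := ENNReal.toReal_pos h02 hfin
  haveI : IsFiniteMeasure (μ.restrict B₂) :=
    ⟨by rw [Measure.restrict_apply_univ]; exact hfin.lt_top⟩
  haveI : IsFiniteMeasure (μ.restrict B₁) :=
    ⟨by rw [Measure.restrict_apply_univ]; exact hfin1.lt_top⟩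
  have hu1 : MemLp u 2 (μ.restrict B₁) :=
    hu.mono_measure (Measure.restrict_mono hsub le_rfl)
  set m₁ := ⨍ z in B₁, u z ∂μ with hm1
  set m₂ := ⨍ z in B₂, u z ∂μ with hm2
  have hUi1 : IntegrableOn u B₁ μ := hu1.integrable one_le_two
  have hsq1 : ∀ c : ℝ, IntegrableOn (fun y => (u y - c) ^ 2) B₁ μ := fun c => by
    have := (hu1.sub (memLp_const c)).integrable_sq
    simpa [IntegrableOn, Pi.sub_apply] using this
  have hsq2 : ∀ c : ℝ, IntegrableOn (fun y => (u y - c) ^ 2) B₂ μ := fun c => by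
    have := (hu.sub (memLp_const c)).integrable_sq
    simpa [IntegrableOn, Pi.sub_apply] using this
  have hmean : ∫ y in B₁, u y ∂μ = (μ B₁).toReal * m₁ := by
    rw [hm1, setAverage_eq, smul_eq_mul, measureReal_def]
    field_simp
  have hkey : ∫ y in B₁, ((u y - m₂) ^ 2 - (u y - m₁) ^ 2) ∂μ
      = (μ B₁).toReal * (m₁ - m₂) ^ 2 := by
    have heq : ∀ y : M, (u y - m₂) ^ 2 - (u y - m₁) ^ 2
        = 2 * (m₁ - m₂) * u y + (m₂ ^ 2 - m₁ ^ 2) := fun y => by ring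
    calc ∫ y in B₁, ((u y - m₂) ^ 2 - (u y - m₁) ^ 2) ∂μ
        = ∫ y in B₁, (2 * (m₁ - m₂) * u y + (m₂ ^ 2 - m₁ ^ 2)) ∂μ := by
          exact integral_congr_ae (Filter.Eventually.of_forall fun y => heq y)
      _ = 2 * (m₁ - m₂) * ∫ y in B₁, u y ∂μ
            + (μ B₁).toReal * (m₂ ^ 2 - m₁ ^ 2) := by
          rw [integral_add (hUi1.const_mul _)
            (integrableOn_const hfin1),
            integral_const_mul, setIntegral_const, smul_eq_mul, measureReal_def]
      _ = (μ B₁).toReal * (m₁ - m₂) ^ 2 := by rw [hmean]; ring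
  have hmin : ∫ y in B₁, (u y - m₁) ^ 2 ∂μ ≤ ∫ y in B₁, (u y - m₂) ^ 2 ∂μ := by
    have hsub' : ∫ y in B₁, ((u y - m₂) ^ 2 - (u y - m₁) ^ 2) ∂μ
        = ∫ y in B₁, (u y - m₂) ^ 2 ∂μ - ∫ y in B₁, (u y - m₁) ^ 2 ∂μ :=
      integral_sub (hsq1 m₂) (hsq1 m₁)
    nlinarith [mul_nonneg hpos1.le (sq_nonneg (m₁ - m₂))]
  have hmono : ∫ y in B₁, (u y - m₂) ^ 2 ∂μ ≤ ∫ y in B₂, (u y - m₂) ^ 2 ∂μ :=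
    setIntegral_mono_set (hsq2 m₂) (Filter.Eventually.of_forall fun y => sq_nonneg _)
      (HasSubset.Subset.eventuallyLE hsub)
  have step : (μ B₁).toReal⁻¹ * ∫ y in B₁, (u y - m₁) ^ 2 ∂μ
      ≤ (μ B₂).toReal / (μ B₁).toReal
        * ((μ B₂).toReal⁻¹ * ∫ y in B₂, (u y - m₂) ^ 2 ∂μ) := by
    have hrw : (μ B₂).toReal / (μ B₁).toReal
        * ((μ B₂).toReal⁻¹ * ∫ y in B₂, (u y - m₂) ^ 2 ∂μ)
        = (μ B₁).toReal⁻¹ * ∫ y in B₂, (u y - m₂) ^ 2 ∂μ := by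
      field_simp
    rw [hrw]
    exact mul_le_mul_of_nonneg_left (hmin.trans hmono) (inv_nonneg.2 hpos1.le)
  have e1 : ⨍ y in B₁, (u y - m₁) ^ 2 ∂μ
      = (μ B₁).toReal⁻¹ * ∫ y in B₁, (u y - m₁) ^ 2 ∂μ := by
    rw [setAverage_eq, smul_eq_mul, measureReal_def]
  have e2 : ⨍ y in B₂, (u y - m₂) ^ 2 ∂μ
      = (μ B₂).toReal⁻¹ * ∫ y in B₂, (u y - m₂) ^ 2 ∂μ := by
    rw [setAverage_eq, smul_eq_mul, measureReal_def]
  rw [osc2_eq_sqrt, osc2_eq_sqrt, ← hm1, ← hm2, e1, e2]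
  calc Real.sqrt ((μ B₁).toReal⁻¹ * ∫ y in B₁, (u y - m₁) ^ 2 ∂μ)
      ≤ Real.sqrt ((μ B₂).toReal / (μ B₁).toReal
          * ((μ B₂).toReal⁻¹ * ∫ y in B₂, (u y - m₂) ^ 2 ∂μ)) :=
        Real.sqrt_le_sqrt step
    _ = Real.sqrt ((μ B₂).toReal / (μ B₁).toReal)
          * Real.sqrt ((μ B₂).toReal⁻¹ * ∫ y in B₂, (u y - m₂) ^ 2 ∂μ) :=
        Real.sqrt_mul (by positivity) _

end Aux

/-- **Oscillation decay** (eq. (4.2) in the proof of Theorem 4.5).  On a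
doubling metric measure space, if `u ∈ L²(B(x₀,R))` satisfies the Hölder-type
estimate `|u(x) − u(y)| ≤ A (d(x,y)/R)^α osc_{B(x₀,R)}(u)` for a.e.
`x, y ∈ B(x₀,R/2)`, then there is `C` (depending only on the doubling
constant, `α` and `A`) such that
`osc_{B(x₀,r)}(u) ≤ C (r/R)^α osc_{B(x₀,R)}(u)` for every `0 < r ≤ R`. -/
theorem oscillation_decay
    {M : Type*} [MetricSpace M] [MeasurableSpace M] [BorelSpace M]
    (μ : Measure M) (C_D : ℝ) (hC_D : 1 ≤ C_D) (hdoub : IsDoublingWith μ C_D)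
    (hμ : ∀ (x : M) (r : ℝ), 0 < r → 0 < μ (ball x r) ∧ μ (ball x r) < ⊤)
    (α A : ℝ) (hα : 0 < α) (hA : 0 ≤ A) :
    ∃ C : ℝ, 0 < C ∧ ∀ (x₀ : M) (R : ℝ) (u : M → ℝ), 0 < R →
      MemLp u 2 (μ.restrict (ball x₀ R)) →
      (∀ᵐ x ∂(μ.restrict (ball x₀ (R / 2))), ∀ᵐ y ∂(μ.restrict (ball x₀ (R / 2))),
        |u x - u y| ≤ A * (dist x y / R) ^ α * osc2 μ (ball x₀ R) u) →
      ∀ r : ℝ, 0 < r → r ≤ R →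
        osc2 μ (ball x₀ r) u ≤ C * (r / R) ^ α * osc2 μ (ball x₀ R) u := by
  refine ⟨2 ^ α * (A + Real.sqrt C_D + 1), by positivity, ?_⟩
  intro x₀ R u hR huL2 hholder r hr hrR
  obtain ⟨hpos_r, hfin_r⟩ := hμ x₀ r hr
  obtain ⟨hpos_R, hfin_R⟩ := hμ x₀ R hR
  set oscR := osc2 μ (ball x₀ R) u with hoscRdef
  have hoscR : 0 ≤ oscR := osc2_nonneg _ _
  have h2pos : (0 : ℝ) < 2 ^ α := Real.rpow_pos_of_pos (by norm_num) α
  have hsnn : 0 ≤ Real.sqrt C_D := Real.sqrt_nonneg _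
  have hrRpos : 0 < r / R := div_pos hr hR
  have hrRα : 0 ≤ (r / R) ^ α := Real.rpow_nonneg hrRpos.le α
  rcases le_or_gt r (R / 2) with hcase | hcase
  · -- small radius: use the Hölder estimate
    have hsub : ball x₀ r ⊆ ball x₀ (R / 2) := ball_subset_ball hcase
    have hballsub : ball x₀ r ⊆ ball x₀ R := ball_subset_ball hrR
    set K := A * (2 * r / R) ^ α * oscR with hKdef
    have hKnn : 0 ≤ K := by
      apply mul_nonneg (mul_nonneg hA (Real.rpow_nonneg (by positivity) α)) hoscR
    have hae : ∀ᵐ x ∂μ.restrict (ball x₀ r), ∀ᵐ y ∂μ.restrict (ball x₀ r),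
        |u x - u y| ≤ K := by
      have h1 := ae_restrict_of_ae_restrict_of_subset hsub hholder
      filter_upwards [h1, ae_restrict_mem measurableSet_ball] with x hx hxmem
      have h2 := ae_restrict_of_ae_restrict_of_subset hsub hx
      filter_upwards [h2, ae_restrict_mem measurableSet_ball] with y hy hymem
      refine hy.trans ?_
      have hdist : dist x y / R ≤ 2 * r / R := by
        have hxd : dist x x₀ < r := mem_ball.1 hxmem
        have hyd : dist y x₀ < r := mem_ball.1 hymem
        have : dist x y < 2 * r := by
          calc dist x y ≤ dist x x₀ + dist x₀ y := dist_triangle _ _ _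
            _ < 2 * r := by rw [dist_comm x₀ y]; linarith
        exact (div_le_div_iff_of_pos_right hR).mpr this.le
      have hpow : (dist x y / R) ^ α ≤ (2 * r / R) ^ α :=
        Real.rpow_le_rpow (by positivity) hdist hα.le
      exact mul_le_mul_of_nonneg_right (mul_le_mul_of_nonneg_left hpow hA) hoscR
    haveI : IsFiniteMeasure (μ.restrict (ball x₀ r)) :=
      ⟨by rw [Measure.restrict_apply_univ]; exact hfin_r⟩
    have hu_r : MemLp u 2 (μ.restrict (ball x₀ r)) :=
      huL2.mono_measure (Measure.restrict_mono hballsub le_rfl)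
    have hint : IntegrableOn u (ball x₀ r) μ := hu_r.integrable one_le_two
    have hosc := osc2_le_of_ae_bound hpos_r.ne' hfin_r.ne hint hKnn hae
    refine hosc.trans ?_
    have h2α : (2 * r / R) ^ α = 2 ^ α * (r / R) ^ α := by
      rw [show 2 * r / R = 2 * (r / R) by ring,
        Real.mul_rpow (by norm_num) hrRpos.le]
    have hfac : A * 2 ^ α ≤ 2 ^ α * (A + Real.sqrt C_D + 1) := by nlinarith
    calc K = (A * 2 ^ α) * ((r / R) ^ α * oscR) := by rw [hKdef, h2α]; ring
      _ ≤ (2 ^ α * (A + Real.sqrt C_D + 1)) * ((r / R) ^ α * oscR) :=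
          mul_le_mul_of_nonneg_right hfac (mul_nonneg hrRα hoscR)
      _ = 2 ^ α * (A + Real.sqrt C_D + 1) * (r / R) ^ α * oscR := by ring
  · have hsub2 : ball x₀ r ⊆ ball x₀ R := ball_subset_ball hrR
    have hcomp := osc2_mono_set hsub2 hpos_r.ne' hfin_R.ne huL2
    have hrpos' : 0 < (μ (ball x₀ r)).toReal := ENNReal.toReal_pos hpos_r.ne' hfin_r.ne
    have hratio : (μ (ball x₀ R)).toReal / (μ (ball x₀ r)).toReal ≤ C_D := by
      have h1 : μ (ball x₀ R) ≤ ENNReal.ofReal C_D * μ (ball x₀ r) :=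
        (measure_mono (ball_subset_ball (by linarith))).trans (hdoub x₀ r hr)
      have hfin' : ENNReal.ofReal C_D * μ (ball x₀ r) ≠ ⊤ :=
        ENNReal.mul_ne_top ENNReal.ofReal_ne_top hfin_r.ne
      have h3 : (μ (ball x₀ R)).toReal ≤ C_D * (μ (ball x₀ r)).toReal := by
        calc (μ (ball x₀ R)).toReal ≤ (ENNReal.ofReal C_D * μ (ball x₀ r)).toReal :=
              ENNReal.toReal_mono hfin' h1
          _ = C_D * (μ (ball x₀ r)).toReal := by
              rw [ENNReal.toReal_mul, ENNReal.toReal_ofReal (by linarith)]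
      rw [div_le_iff₀ hrpos']; linarith
    have hsq : Real.sqrt ((μ (ball x₀ R)).toReal / (μ (ball x₀ r)).toReal)
        ≤ Real.sqrt C_D := Real.sqrt_le_sqrt hratio
    have hhalf : (1 / 2 : ℝ) ≤ r / R := by rw [le_div_iff₀ hR]; linarith
    have hone : (1 : ℝ) ≤ 2 ^ α * (r / R) ^ α := by
      have h12 : (2:ℝ) ^ α * (1/2 : ℝ) ^ α = 1 := by
        rw [← Real.mul_rpow (by norm_num) (by norm_num)]; norm_num
      have hp : ((1:ℝ)/2) ^ α ≤ (r / R) ^ α :=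
        Real.rpow_le_rpow (by norm_num) hhalf hα.le
      nlinarith
    have hkey : Real.sqrt C_D ≤ 2 ^ α * (A + Real.sqrt C_D + 1) * (r / R) ^ α := by
      have hT : 0 ≤ A + Real.sqrt C_D + 1 := by linarith
      calc Real.sqrt C_D ≤ (A + Real.sqrt C_D + 1) * 1 := by linarith
        _ ≤ (A + Real.sqrt C_D + 1) * (2 ^ α * (r / R) ^ α) :=
            mul_le_mul_of_nonneg_left hone hT
        _ = 2 ^ α * (A + Real.sqrt C_D + 1) * (r / R) ^ α := by ring
    calc osc2 μ (ball x₀ r) u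
        ≤ Real.sqrt ((μ (ball x₀ R)).toReal / (μ (ball x₀ r)).toReal) * oscR := hcomp
      _ ≤ Real.sqrt C_D * oscR := mul_le_mul_of_nonneg_right hsq hoscR
      _ ≤ 2 ^ α * (A + Real.sqrt C_D + 1) * (r / R) ^ α * oscR :=
          mul_le_mul_of_nonneg_right hkey hoscR
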